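/- Suppose θ is an infinite regular cardinal below κ, ⟨H_i : i < θ⟩ is a sequence of pairwise disjoint subsets of κ, and ⟨C_α : α < κ⟩ is a C-sequence such that for every limit α < κ, sup{i < θ : acc(C_α) ∩ H_i ≠ ∅} < θ. Define h(γ) := sup{i < θ : (acc(C_γ) ∪ {γ}) ∩ H_i ≠ ∅} and c(α,β) := max{h(τ) : τ ∈ im(tr(α,β))}. Then c is a closed coloring: for all β < κ and i ≤ θ, the set {α < β : c(α,β) ≤ i} contains all its accumulation points below β. -/

import Mathlib

open Cardinal Set Ordinal

noncomputable section

/-- `s` (a set in a `Type 1`, such as a set of ordinals) has small cardinality `μ`. -/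
def HasCard {α : Type 1} (s : Set α) (μ : Cardinal.{0}) : Prop :=
  Cardinal.mk s = Cardinal.lift.{1, 0} μ

/-- `a < b` for sets of ordinals: every element of `a` is below every element of `b`. -/
def SetLT (a b : Set Ordinal) : Prop := ∀ α ∈ a, ∀ β ∈ b, α < β

/-- `A` is a family of `κ`-many pairwise disjoint subsets of `κ`, each of cardinality `χ'`. -/
def IsDisjFamily (κ χ' : Cardinal) (A : Set (Set Ordinal)) : Prop :=
  (∀ a ∈ A, a ⊆ Set.Iio κ.ord ∧ HasCard a χ') ∧
    A.PairwiseDisjoint id ∧ HasCard A κ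

/-- `A` is a family of `κ`-many pairwise disjoint subsets of `κ`, each of cardinality `< χ`. -/
def IsDisjFamilyLT (κ χ : Cardinal) (A : Set (Set Ordinal)) : Prop :=
  (∀ a ∈ A, a ⊆ Set.Iio κ.ord ∧ Cardinal.mk a < Cardinal.lift.{1, 0} χ) ∧
    A.PairwiseDisjoint id ∧ HasCard A κ

/-- `c` is a coloring of pairs of ordinals below `κ` with colors `< θ`. -/
def IsColoring (κ θ : Cardinal) (c : Ordinal → Ordinal → Ordinal) : Prop :=
  ∀ α β : Ordinal, α < β → β < κ.ord → c α β < θ.ord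

/-- `c` witnesses `U(κ, μ, θ, χ)`. -/
def WitnessU (κ μ θ χ : Cardinal) (c : Ordinal → Ordinal → Ordinal) : Prop :=
  IsColoring κ θ c ∧
    ∀ χ' < χ, ∀ A : Set (Set Ordinal), IsDisjFamily κ χ' A →
      ∀ i < θ.ord, ∃ B ⊆ A, HasCard B μ ∧
        ∀ a ∈ B, ∀ b ∈ B, SetLT a b → ∀ α ∈ a, ∀ β ∈ b, i < c α β

/-- The principle `U(κ, μ, θ, χ)`. -/
def U (κ μ θ χ : Cardinal) : Prop := ∃ c, WitnessU κ μ θ χ c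

/-- `D` is a club in (the ordinal) `o`: a closed and unbounded subset of `o`. -/
def IsClubOrd (D : Set Ordinal) (o : Ordinal) : Prop :=
  D ⊆ Set.Iio o ∧ (∀ α < o, ∃ β ∈ D, α ≤ β) ∧
    ∀ γ < o, 0 < γ → (∀ x < γ, ∃ β ∈ D, x < β ∧ β < γ) → γ ∈ D

/-- `S` is stationary in `o`: it meets every club in `o`. -/
def IsStationaryOrd (S : Set Ordinal) (o : Ordinal) : Prop :=
  ∀ D, IsClubOrd D o → (S ∩ D).Nonempty

/-- A `C`-sequence over `κ`. -/
def IsCSeq (κ : Cardinal) (C : Ordinal → Set Ordinal) : Prop :=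
  C 0 = ∅ ∧ (∀ α, C (α + 1) = {α}) ∧
    ∀ α < κ.ord, Order.IsSuccLimit α → IsClubOrd (C α) α

/-- The walk `Tr(α,β)` from `β` down to `α` along the `C`-sequence `C`. -/
def walk (C : Ordinal → Set Ordinal) (α β : Ordinal) : ℕ → Ordinal
  | 0 => β
  | n + 1 =>
      if α < walk C α β n then sInf {γ ∈ C (walk C α β n) | α ≤ γ} else α

/-- `ρ₂(α,β)`: the number of steps of the walk from `β` down to `α`. -/
def rho2 (C : Ordinal → Set Ordinal) (α β : Ordinal) : ℕ :=
  sInf {n : ℕ | walk C α β n = α}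

/-- `λ₂(α,β) = sup (α ∩ {sup (C_δ ∩ α) : δ ∈ im (tr (α,β))})`. -/
def lambda2 (C : Ordinal → Set Ordinal) (α β : Ordinal) : Ordinal :=
  sSup {x : Ordinal | x < α ∧
    ∃ n < rho2 C α β, x = sSup (C (walk C α β n) ∩ Set.Iio α)}

/-- The set of accumulation points of `s` that belong to `s`. -/
def accSet (s : Set Ordinal) : Set Ordinal :=
  {δ ∈ s | 0 < δ ∧ ∀ x < δ, ∃ y ∈ s, x < y ∧ y < δ}

/-- `c` is a closed coloring: for all `β < κ` and `i ≤ θ`, the set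
`{α < β : c α β ≤ i}` contains all of its accumulation points below `β`. -/
def ClosedColoring (κ θ : Cardinal) (c : Ordinal → Ordinal → Ordinal) : Prop :=
  ∀ β < κ.ord, ∀ i ≤ θ.ord, ∀ γ < β, 0 < γ →
    (∀ x < γ, ∃ α, x < α ∧ α < γ ∧ c α β ≤ i) → c γ β ≤ i

/-- `h(γ) := sup {i < θ : (acc(C_γ) ∪ {γ}) ∩ H_i ≠ ∅}`. -/
def hH (θ : Cardinal) (C : Ordinal → Set Ordinal) (H : Ordinal → Set Ordinal)
    (γ : Ordinal) : Ordinal :=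
  sSup {i | i < θ.ord ∧ ((accSet (C γ) ∪ {γ}) ∩ H i).Nonempty}

/-- `c(α,β) := max {h(τ) : τ ∈ im (tr (α,β))}`. -/
def colorH (C : Ordinal → Set Ordinal) (h : Ordinal → Ordinal)
    (α β : Ordinal) : Ordinal :=
  sSup {x | ∃ n < rho2 C α β, x = h (walk C α β n)}

/-! Auxiliary lemmas for `stmt13`. -/

lemma cseq_subset' {κ : Cardinal} {C : Ordinal → Set Ordinal} (hC : IsCSeq κ C)
    {δ : Ordinal} (hδ : δ < κ.ord) : C δ ⊆ Set.Iio δ := by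
  rcases Ordinal.zero_or_succ_or_isSuccLimit δ with h | ⟨ξ, h⟩ | h
  · subst h; rw [hC.1]; simp
  · subst h; rw [← Ordinal.add_one_eq_succ, hC.2.1]
    intro y hy
    simp only [Set.mem_singleton_iff] at hy
    rw [Set.mem_Iio, hy, Ordinal.add_one_eq_succ]
    exact Order.lt_succ ξ
  · exact (hC.2.2 δ hδ h).1

lemma cseq_closed' {κ : Cardinal} {C : Ordinal → Set Ordinal} (hC : IsCSeq κ C)
    {δ γ : Ordinal} (hδ : δ < κ.ord) (hγ0 : 0 < γ) (hγδ : γ < δ)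
    (hcl : ∀ x < γ, ∃ y ∈ C δ, x < y ∧ y < γ) : γ ∈ C δ := by
  rcases Ordinal.zero_or_succ_or_isSuccLimit δ with h | ⟨ξ, h⟩ | h
  · subst h; exact absurd hγδ (by simp)
  · subst h
    rw [← Ordinal.add_one_eq_succ, hC.2.1] at hcl ⊢
    obtain ⟨y, hy, _, hyγ⟩ := hcl 0 hγ0
    simp only [Set.mem_singleton_iff] at hy; subst hy
    obtain ⟨y, hy, hlt, _⟩ := hcl _ hyγ
    simp only [Set.mem_singleton_iff] at hy; subst hy
    exact absurd hlt (lt_irrefl _)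
  · exact (hC.2.2 δ hδ h).2.2 γ hγδ hγ0 hcl

lemma walk_succ_eq (C : Ordinal → Set Ordinal) (α β : Ordinal) (n : ℕ) :
    walk C α β (n + 1) =
      if α < walk C α β n then sInf {γ ∈ C (walk C α β n) | α ≤ γ} else α := rfl

lemma walk_step' {κ : Cardinal} {C : Ordinal → Set Ordinal} (hC : IsCSeq κ C)
    {α β : Ordinal} (hκ : β < κ.ord) (n : ℕ)
    (hlt : α < walk C α β n) (hle : walk C α β n ≤ β) :
    walk C α β (n + 1) ∈ C (walk C α β n) ∧ α ≤ walk C α β (n + 1) ∧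
      walk C α β (n + 1) < walk C α β n := by
  set δ := walk C α β n with hδdef
  have hδκ : δ < κ.ord := lt_of_le_of_lt hle hκ
  have hS : {y ∈ C δ | α ≤ y}.Nonempty := by
    rcases Ordinal.zero_or_succ_or_isSuccLimit δ with h | ⟨ξ, h⟩ | h
    · exact absurd (h ▸ hlt) (by simp)
    · refine ⟨ξ, ?_, ?_⟩
      · rw [← h, ← Ordinal.add_one_eq_succ, hC.2.1]; rfl
      · have : α < Order.succ ξ := h ▸ hlt
        exact Order.lt_succ_iff.mp this
    · obtain ⟨y, hy, hxy⟩ := (hC.2.2 δ hδκ h).2.1 α hlt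
      exact ⟨y, hy, hxy⟩
  have hw : walk C α β (n + 1) = sInf {y ∈ C δ | α ≤ y} := by
    rw [walk_succ_eq, if_pos hlt]
  have hmem := csInf_mem hS
  rw [← hw] at hmem
  exact ⟨hmem.1, hmem.2, cseq_subset' hC hδκ hmem.1⟩

lemma walk_bounds' {κ : Cardinal} {C : Ordinal → Set Ordinal} (hC : IsCSeq κ C)
    {α β : Ordinal} (hκ : β < κ.ord) (hαβ : α ≤ β) (n : ℕ) :
    α ≤ walk C α β n ∧ walk C α β n ≤ β := by
  induction n with
  | zero => exact ⟨hαβ, le_rfl⟩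
  | succ n ih =>
    by_cases hlt : α < walk C α β n
    · obtain ⟨_, h2, h3⟩ := walk_step' hC hκ n hlt ih.2
      exact ⟨h2, le_trans h3.le ih.2⟩
    · rw [walk_succ_eq, if_neg hlt]
      exact ⟨le_rfl, hαβ⟩

lemma walk_reaches' {κ : Cardinal} {C : Ordinal → Set Ordinal} (hC : IsCSeq κ C)
    {α β : Ordinal} (hκ : β < κ.ord) (hαβ : α < β) :
    ∃ n, walk C α β n = α := by
  by_contra h
  push_neg at h
  have key : ∀ n, α < walk C α β n ∧ walk C α β n ≤ β := by
    intro n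
    obtain ⟨h1, h2⟩ := walk_bounds' hC hκ hαβ.le n
    exact ⟨lt_of_le_of_ne h1 (Ne.symm (h n)), h2⟩
  obtain ⟨m, ⟨n, rfl⟩, hmin⟩ := wellFounded_lt.has_min (Set.range (walk C α β))
    ⟨β, 0, rfl⟩
  exact hmin (walk C α β (n + 1)) ⟨n + 1, rfl⟩
    (walk_step' hC hκ n (key n).1 (key n).2).2.2

theorem stmt13 (κ θ : Cardinal) (C : Ordinal → Set Ordinal)
    (H : Ordinal → Set Ordinal)
    (hκreg : κ.IsRegular) (hκunc : ℵ₀ < κ)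
    (hθreg : θ.IsRegular) (hθκ : θ < κ)
    (hHdisj : ∀ i < θ.ord, ∀ j < θ.ord, i ≠ j → Disjoint (H i) (H j))
    (hC : IsCSeq κ C)
    (hsmall : ∀ α < κ.ord, Order.IsSuccLimit α →
      sSup {i | i < θ.ord ∧ (accSet (C α) ∩ H i).Nonempty} < θ.ord) :
    ClosedColoring κ θ (colorH C (hH θ C H)) := by
  intro β hβ i hi γ hγβ hγ0 hx
  set R := rho2 C γ β with hRdef
  -- basic facts about the walk from β to γ
  have hwγ : ∀ n < R, γ < walk C γ β n ∧ walk C γ β n ≤ β := by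
    intro n hn
    obtain ⟨h1, h2⟩ := walk_bounds' hC hβ hγβ.le n
    refine ⟨lt_of_le_of_ne h1 (Ne.symm ?_), h2⟩
    exact Nat.notMem_of_lt_sInf hn
  -- for every non-final step, C (walk n) ∩ γ is bounded below γ
  have hbound : ∀ n, n + 1 < R → ∃ x < γ, ∀ y ∈ C (walk C γ β n), y < γ → y ≤ x := by
    intro n hn1
    by_contra hcon
    push_neg at hcon
    have hn : n < R := Nat.lt_of_succ_lt hn1
    obtain ⟨hγδ, hδβ⟩ := hwγ n hn
    have hδκ : walk C γ β n < Cardinal.ord κ := lt_of_le_of_lt hδβ hβ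
    have hmem : γ ∈ C (walk C γ β n) := by
      refine cseq_closed' hC hδκ hγ0 hγδ ?_
      intro x hxγ
      obtain ⟨y, hy, hyγ, hxy⟩ := hcon x hxγ
      exact ⟨y, hy, hxy, hyγ⟩
    have hw : walk C γ β (n + 1) = sInf {y ∈ C (walk C γ β n) | γ ≤ y} := by
      rw [walk_succ_eq, if_pos hγδ]
    have hle : walk C γ β (n + 1) ≤ γ := by
      rw [hw]
      exact csInf_le (OrderBot.bddBelow _) ⟨hmem, le_rfl⟩
    exact absurd (hwγ (n + 1) hn1).1 (not_lt.mpr hle)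
  -- a uniform bound ε < γ
  classical
  set f : ℕ → Ordinal := fun n =>
    if hn : n + 1 < R then (hbound n hn).choose else 0 with hfdef
  set ε : Ordinal := (Finset.range R).sup f with hεdef
  have hεγ : ε < γ := by
    rw [hεdef]
    refine Finset.sup_lt_iff (by simpa using hγ0) |>.mpr ?_
    intro n _
    rw [hfdef]
    by_cases hn : n + 1 < R
    · simpa [hn] using (hbound n hn).choose_spec.1
    · simpa [hn] using hγ0
  obtain ⟨α, hεα, hαγ, hcα⟩ := hx ε hεγ
  have hαβ : α < β := lt_trans hαγ hγβ
  -- the walk to α agrees with the walk to γ on the first R steps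
  have hagree : ∀ n, n < R → walk C α β n = walk C γ β n := by
    intro n
    induction n with
    | zero => intro _; rfl
    | succ n ih =>
      intro hn1
      have hn : n < R := Nat.lt_of_succ_lt hn1
      have ihn := ih hn
      obtain ⟨hγδ, hδβ⟩ := hwγ n hn
      have hαδ : α < walk C α β n := by rw [ihn]; exact lt_trans hαγ hγδ
      have hseteq : {y ∈ C (walk C γ β n) | α ≤ y} = {y ∈ C (walk C γ β n) | γ ≤ y} := by
        ext y
        simp only [Set.mem_setOf_eq, Set.mem_sep_iff]
        refine ⟨fun ⟨hy, hay⟩ => ⟨hy, ?_⟩, fun ⟨hy, hgy⟩ => ⟨hy, le_trans hαγ.le hgy⟩⟩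
        by_contra hyγ
        push_neg at hyγ
        have hyε : y ≤ f n := by
          rw [hfdef]
          simpa [hn1] using (hbound n hn1).choose_spec.2 y hy hyγ
        have : f n ≤ ε := Finset.le_sup (Finset.mem_range.mpr hn)
        exact absurd hay (not_le.mpr (lt_of_le_of_lt (le_trans hyε this) hεα))
      rw [walk_succ_eq, if_pos hαδ, ihn, hseteq, walk_succ_eq, if_pos hγδ]
  -- the walk from β to α terminates
  have hterm : ∃ n, walk C α β n = α := walk_reaches' hC hβ hαβ
  have hRα : ∀ n < R, n < rho2 C α β := by
    intro n hn
    by_contra hle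
    push_neg at hle
    have hmem : walk C α β (rho2 C α β) = α := Nat.sInf_mem hterm
    have hlt : rho2 C α β < R := lt_of_le_of_lt hle hn
    rw [hagree _ hlt] at hmem
    exact absurd hmem (ne_of_gt (lt_trans hαγ (hwγ _ hlt).1))
  -- conclude
  have hfin : BddAbove {x | ∃ n < rho2 C α β, x = hH θ C H (walk C α β n)} := by
    have : {x | ∃ n < rho2 C α β, x = hH θ C H (walk C α β n)} =
        (fun n => hH θ C H (walk C α β n)) '' (Set.Iio (rho2 C α β)) := by
      ext x; simp [eq_comm]
    rw [this]
    exact ((Set.finite_Iio _).image _).bddAbove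
  refine csSup_le' ?_
  rintro x ⟨n, hn, rfl⟩
  have hmemα : hH θ C H (walk C γ β n) ∈
      {x | ∃ m < rho2 C α β, x = hH θ C H (walk C α β m)} :=
    ⟨n, hRα n hn, by rw [hagree n hn]⟩
  calc hH θ C H (walk C γ β n) ≤ colorH C (hH θ C H) α β := le_csSup hfin hmemα
    _ ≤ i := hcα
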